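/- Let R(t) be a continuous symmetric k×k matrix-valued function on an interval (0,a) with R(t) ≥ −I (in the sense of quadratic forms, equivalently all eigenvalues of R(t) are ≥ −1). Let ε₁(t), …, ε_k(t) be ℝᵏ-valued solutions of the Jacobi equation ε'' = −R ε which are linearly independent at each point of (0,a) and satisfy the symmetry condition ⟨ε_i', ε_j⟩ = ⟨ε_i, ε_j'⟩ for all i,j,t. Then t ↦ |ε₁(t)| / sinh(t) is non-increasing on (0,a). -/

import Mathlib

open Set
open scoped RealInnerProductSpace

-- ===== auxiliary scalar lemmas =====

lemma sinh_le_mul_cosh {s : ℝ} (hs : 0 ≤ s) : Real.sinh s ≤ s * Real.cosh s := by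
  have hmono : MonotoneOn (fun x : ℝ => x * Real.cosh x - Real.sinh x) (Icc 0 s) := by
    apply monotoneOn_of_deriv_nonneg (convex_Icc 0 s)
    · fun_prop
    · intro x hx
      apply DifferentiableAt.differentiableWithinAt
      fun_prop
    · intro x hx
      rw [interior_Icc] at hx
      have hd : HasDerivAt (fun x : ℝ => x * Real.cosh x - Real.sinh x)
          (1 * Real.cosh x + x * Real.sinh x - Real.cosh x) x :=
        ((hasDerivAt_id x).mul (Real.hasDerivAt_cosh x)).sub (Real.hasDerivAt_sinh x)
      rw [hd.deriv]
      have := mul_nonneg hx.1.le (Real.sinh_pos_iff.2 hx.1).le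
      linarith
  rcases eq_or_lt_of_le hs with h | h
  · simp [← h]
  · have := hmono (left_mem_Icc.2 hs) (right_mem_Icc.2 hs) hs
    simp at this
    linarith

lemma riccati_coth {a : ℝ} (h h' : ℝ → ℝ)
    (hd : ∀ t ∈ Ioo 0 a, HasDerivAt h (h' t) t)
    (hb : ∀ t ∈ Ioo 0 a, h' t ≤ 1 - (h t)^2)
    {t₀ : ℝ} (ht₀ : t₀ ∈ Ioo 0 a) :
    h t₀ ≤ Real.cosh t₀ / Real.sinh t₀ := by
  obtain ⟨ht₀0, ht₀a⟩ := ht₀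
  by_contra hc
  push_neg at hc
  have hsinht₀ : 0 < Real.sinh t₀ := Real.sinh_pos_iff.2 ht₀0
  have hφ : ContinuousAt (fun s : ℝ => Real.cosh (t₀ - s) / Real.sinh (t₀ - s)) 0 := by
    apply ContinuousAt.div
    · fun_prop
    · fun_prop
    · simpa using hsinht₀.ne'
  have hev : ∀ᶠ s in nhds (0:ℝ), Real.cosh (t₀ - s) / Real.sinh (t₀ - s) < h t₀ := by
    have := hφ.tendsto
    simp only [sub_zero] at this
    exact this.eventually_lt_const hc
  obtain ⟨δ, hδ0, hδ⟩ := Metric.eventually_nhds_iff.1 hev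
  set τ := min (δ/2) (t₀/2) with hτdef
  have hτ0 : 0 < τ := lt_min (by linarith) (by linarith)
  have hτt₀ : τ < t₀ := lt_of_le_of_lt (min_le_right _ _) (by linarith)
  have hμt₀ : Real.cosh (t₀ - τ) / Real.sinh (t₀ - τ) < h t₀ := by
    apply hδ
    simp only [dist_zero_right, Real.norm_eq_abs, abs_of_pos hτ0]
    exact lt_of_le_of_lt (min_le_left _ _) (by linarith)
  set μ : ℝ → ℝ := fun t => Real.cosh (t - τ) / Real.sinh (t - τ) with hμdef
  have hμd : ∀ t, τ < t → HasDerivAt μ (1 - μ t ^ 2) t := by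
    intro t ht
    have hsh : 0 < Real.sinh (t - τ) := Real.sinh_pos_iff.2 (by linarith)
    have h1 : HasDerivAt (fun t : ℝ => Real.cosh (t - τ)) (Real.sinh (t - τ) * 1) t :=
      (Real.hasDerivAt_cosh (t - τ)).comp (h₂ := Real.cosh) t (((hasDerivAt_id t).sub_const τ))
    have h2 : HasDerivAt (fun t : ℝ => Real.sinh (t - τ)) (Real.cosh (t - τ) * 1) t :=
      (Real.hasDerivAt_sinh (t - τ)).comp (h₂ := Real.sinh) t (((hasDerivAt_id t).sub_const τ))
    have := h1.div h2 hsh.ne'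
    refine this.congr_deriv ?_
    symm
    have hc2 : Real.cosh (t - τ) ^ 2 = 1 + Real.sinh (t - τ) ^ 2 := Real.cosh_sq' (t - τ)
    show 1 - (Real.cosh (t - τ) / Real.sinh (t - τ)) ^ 2 = _
    field_simp
  have hμcont : ∀ t, τ < t → ContinuousAt μ t := fun t ht => (hμd t ht).continuousAt
  have hIccsub : Icc τ t₀ ⊆ Ioo 0 a := fun x hx =>
    ⟨lt_of_lt_of_le hτ0 hx.1, lt_of_le_of_lt hx.2 ht₀a⟩
  have hcont : ContinuousOn h (Icc τ t₀) := fun x hx =>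
    ((hd x (hIccsub hx)).continuousAt).continuousWithinAt
  obtain ⟨x₀, hx₀, hmax⟩ := isCompact_Icc.exists_isMaxOn ⟨τ, left_mem_Icc.2 hτt₀.le⟩ hcont
  set M := max (h x₀) 1 with hMdef
  have hM : ∀ t ∈ Icc τ t₀, h t ≤ M := fun t ht => le_trans (hmax ht) (le_max_left _ _)
  have hM1 : (1:ℝ) ≤ M := le_max_right _ _
  set s₁ := min ((t₀ - τ)/2) (1/(M+1)) with hs₁def
  have hs₁0 : 0 < s₁ := lt_min (by linarith) (by positivity)
  set t₁ := τ + s₁ with ht₁def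
  have ht₁t₀ : t₁ < t₀ := by
    have : s₁ ≤ (t₀ - τ)/2 := min_le_left _ _
    simp only [ht₁def]; linarith
  have ht₁τ : τ < t₁ := by simp only [ht₁def]; linarith
  have hμt₁ : M < μ t₁ := by
    have hsh : 0 < Real.sinh s₁ := Real.sinh_pos_iff.2 hs₁0
    have h1 : Real.sinh s₁ ≤ s₁ * Real.cosh s₁ := sinh_le_mul_cosh hs₁0.le
    have h2 : 1/s₁ ≤ Real.cosh s₁ / Real.sinh s₁ := by
      rw [div_le_div_iff₀ hs₁0 hsh]; linarith
    have h3 : M + 1 ≤ 1/s₁ := by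
      have : s₁ ≤ 1/(M+1) := min_le_right _ _
      rw [le_div_iff₀ hs₁0]
      calc (M+1) * s₁ ≤ (M+1) * (1/(M+1)) := by
            apply mul_le_mul_of_nonneg_left this (by linarith)
      _ = 1 := by field_simp
    have : t₁ - τ = s₁ := by simp [ht₁def]
    simp only [hμdef, this]
    linarith
  have hht₁ : h t₁ < μ t₁ := lt_of_le_of_lt (hM t₁ ⟨ht₁τ.le, ht₁t₀.le⟩) hμt₁
  set p : ℝ → ℝ := fun s => h s + μ s with hpdef
  have hU : IsOpen (Ioo τ a) := isOpen_Ioo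
  have hsubU : Icc t₁ t₀ ⊆ Ioo τ a := fun x hx =>
    ⟨lt_of_lt_of_le ht₁τ hx.1, lt_of_le_of_lt hx.2 ht₀a⟩
  have hsubIoo : Ioo τ a ⊆ Ioo 0 a := fun x hx => ⟨lt_trans hτ0 hx.1, hx.2⟩
  have hpcont : ContinuousOn p (Ioo τ a) := fun x hx =>
    (((hd x (hsubIoo hx)).continuousAt).add (hμcont x hx.1)).continuousWithinAt
  set P : ℝ → ℝ := fun s => ∫ u in t₁..s, p u with hPdef
  have hPd : ∀ s ∈ Icc t₁ t₀, HasDerivAt P (p s) s := by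
    intro s hs
    apply intervalIntegral.integral_hasDerivAt_right
    · apply ContinuousOn.intervalIntegrable
      apply hpcont.mono
      intro x hx
      apply hsubU
      rw [uIcc_of_le hs.1] at hx
      exact ⟨hx.1, le_trans hx.2 hs.2⟩
    · exact hpcont.stronglyMeasurableAtFilter hU s (hsubU hs)
    · exact hpcont.continuousAt (hU.mem_nhds (hsubU hs))
  set w : ℝ → ℝ := fun s => (h s - μ s) * Real.exp (P s) with hwdef
  have hwd : ∀ s ∈ Icc t₁ t₀, HasDerivAt w
      ((h' s - (1 - μ s ^ 2)) * Real.exp (P s) + (h s - μ s) * (p s * Real.exp (P s))) s := by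
    intro s hs
    have h1 : HasDerivAt (fun s => h s - μ s) (h' s - (1 - μ s ^ 2)) s :=
      (hd s (hsubIoo (hsubU hs))).sub (hμd s (hsubU hs).1)
    have h2 : HasDerivAt (fun s => Real.exp (P s)) (p s * Real.exp (P s)) s := by
      have := (hPd s hs).exp
      convert this using 1; ring
    exact h1.mul h2
  have hwderiv_nonpos : ∀ s ∈ Icc t₁ t₀,
      (h' s - (1 - μ s ^ 2)) * Real.exp (P s) + (h s - μ s) * (p s * Real.exp (P s)) ≤ 0 := by
    intro s hs
    have hbs := hb s (hsubIoo (hsubU hs))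
    have hex : 0 < Real.exp (P s) := Real.exp_pos _
    have key : (h' s - (1 - μ s ^ 2)) + (h s - μ s) * p s ≤ 0 := by
      simp only [hpdef]; nlinarith
    nlinarith [hex]
  have hwanti : AntitoneOn w (Icc t₁ t₀) := by
    apply antitoneOn_of_deriv_nonpos (convex_Icc t₁ t₀)
    · exact fun x hx => ((hwd x hx).continuousAt).continuousWithinAt
    · intro x hx
      rw [interior_Icc] at hx
      exact ((hwd x (Ioo_subset_Icc_self hx)).differentiableAt).differentiableWithinAt
    · intro x hx
      rw [interior_Icc] at hx
      rw [(hwd x (Ioo_subset_Icc_self hx)).deriv]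
      exact hwderiv_nonpos x (Ioo_subset_Icc_self hx)
  have hw01 : w t₀ ≤ w t₁ :=
    hwanti (left_mem_Icc.2 ht₁t₀.le) (right_mem_Icc.2 ht₁t₀.le) ht₁t₀.le
  have hwt₀ : 0 ≤ w t₀ := by
    have h5 : μ t₀ < h t₀ := hμt₀
    have := Real.exp_pos (P t₀)
    simp only [hwdef]
    nlinarith
  have hwt₁ : w t₁ < 0 := by
    have := Real.exp_pos (P t₁)
    simp only [hwdef]
    nlinarith
  linarith

-- ===== the operator E =====

noncomputable def opE {k : ℕ} (ε : Fin k → ℝ → EuclideanSpace ℝ (Fin k)) (t : ℝ) :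
    EuclideanSpace ℝ (Fin k) →L[ℝ] EuclideanSpace ℝ (Fin k) :=
  ∑ i, ContinuousLinearMap.smulRightL ℝ (EuclideanSpace ℝ (Fin k)) (EuclideanSpace ℝ (Fin k))
    (EuclideanSpace.proj i) (ε i t)

lemma opE_apply {k : ℕ} (ε : Fin k → ℝ → EuclideanSpace ℝ (Fin k)) (t : ℝ)
    (x : EuclideanSpace ℝ (Fin k)) :
    opE ε t x = ∑ i, x i • ε i t := by
  simp [opE, ContinuousLinearMap.sum_apply, ContinuousLinearMap.smulRightL,
    ContinuousLinearMap.smulRight_apply]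

lemma opE_hasDerivAt {k : ℕ} (ε : Fin k → ℝ → EuclideanSpace ℝ (Fin k))
    (hd : ∀ i, Differentiable ℝ (ε i)) (t : ℝ) :
    HasDerivAt (opE ε) (opE (fun i => deriv (ε i)) t) t := by
  apply HasDerivAt.fun_sum
  intro i _
  exact (ContinuousLinearMap.smulRightL ℝ (EuclideanSpace ℝ (Fin k)) (EuclideanSpace ℝ (Fin k))
    (EuclideanSpace.proj i)).hasFDerivAt.comp_hasDerivAt t ((hd i t).hasDerivAt)

lemma opE_single {k : ℕ} (ε : Fin k → ℝ → EuclideanSpace ℝ (Fin k)) (t : ℝ) (i0 : Fin k) :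
    opE ε t (EuclideanSpace.single i0 1) = ε i0 t := by
  rw [opE_apply]
  rw [Finset.sum_eq_single i0]
  · simp
  · intro i _ hne
    simp [EuclideanSpace.single_apply, hne]
  · simp

lemma opE_isUnit {k : ℕ} (ε : Fin k → ℝ → EuclideanSpace ℝ (Fin k)) (t : ℝ)
    (h : LinearIndependent ℝ (fun i => ε i t)) : IsUnit (opE ε t) := by
  rw [ContinuousLinearMap.isUnit_iff_bijective]
  have hinj : Function.Injective (opE ε t) := by
    intro x y hxy
    have h0 : opE ε t (x - y) = 0 := by rw [map_sub, hxy, sub_self]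
    rw [opE_apply] at h0
    have hz := Fintype.linearIndependent_iff.1 h (fun i => (x - y) i) h0
    have : x - y = 0 := by
      ext i
      exact hz i
    rw [sub_eq_zero] at this
    exact this
  have hinj' : Function.Injective
      (opE ε t : EuclideanSpace ℝ (Fin k) →ₗ[ℝ] EuclideanSpace ℝ (Fin k)) := hinj
  exact ⟨hinj, LinearMap.injective_iff_surjective.1 hinj'⟩

-- ===== main theorem =====

set_option maxHeartbeats 1000000 in
/-- Donaldson, "Extremal metrics on toric surfaces, I", Lemma 5:
let `R(t)` be a continuous symmetric matrix-valued function on `(0,a)` with `R(t) ≥ −I`,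
and let `ε₁, …, ε_k` be solutions of the Jacobi equation `ε'' = −Rε`, linearly independent at
each point and satisfying `⟨εᵢ', εⱼ⟩ = ⟨εᵢ, εⱼ'⟩`. Then `t ↦ |ε₁(t)|/sinh t` is
non-increasing on `(0,a)`. -/
theorem stmt8 {k : ℕ} (hk : 0 < k) (a : ℝ) (ha : 0 < a)
    (R : ℝ → EuclideanSpace ℝ (Fin k) →L[ℝ] EuclideanSpace ℝ (Fin k))
    (hRcont : ContinuousOn R (Ioo 0 a))
    (hRsym : ∀ t ∈ Ioo 0 a, ∀ v w : EuclideanSpace ℝ (Fin k), ⟪R t v, w⟫ = ⟪v, R t w⟫)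
    (hRbound : ∀ t ∈ Ioo 0 a, ∀ v : EuclideanSpace ℝ (Fin k), -(‖v‖^2) ≤ ⟪R t v, v⟫)
    (ε : Fin k → ℝ → EuclideanSpace ℝ (Fin k))
    (hdiff : ∀ i, Differentiable ℝ (ε i) ∧ Differentiable ℝ (deriv (ε i)))
    (hjacobi : ∀ i, ∀ t ∈ Ioo 0 a, deriv (deriv (ε i)) t = -(R t (ε i t)))
    (hindep : ∀ t ∈ Ioo 0 a, LinearIndependent ℝ (fun i => ε i t))
    (hsymsol : ∀ i j, ∀ t ∈ Ioo 0 a, ⟪deriv (ε i) t, ε j t⟫ = ⟪ε i t, deriv (ε j) t⟫) :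
    AntitoneOn (fun t => ‖ε ⟨0, hk⟩ t‖ / Real.sinh t) (Ioo 0 a) := by
  classical
  set i0 : Fin k := ⟨0, hk⟩ with hi0def
  set E := opE ε with hEdef
  set E₁ := opE (fun i => deriv (ε i)) with hE₁def
  set E₂ := opE (fun i => deriv (deriv (ε i))) with hE₂def
  have hEd : ∀ t, HasDerivAt E (E₁ t) t := fun t =>
    opE_hasDerivAt ε (fun i => (hdiff i).1) t
  have hE₁d : ∀ t, HasDerivAt E₁ (E₂ t) t := fun t =>
    opE_hasDerivAt (fun i => deriv (ε i)) (fun i => (hdiff i).2) t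
  have hunit : ∀ t ∈ Ioo 0 a, IsUnit (E t) := fun t ht => opE_isUnit ε t (hindep t ht)
  set N := fun t => Ring.inverse (E t) with hNdef
  have hNE : ∀ t ∈ Ioo 0 a, ∀ x, N t (E t x) = x := by
    intro t ht x
    have h1 : N t * E t = 1 := Ring.inverse_mul_cancel _ (hunit t ht)
    calc N t (E t x) = (N t * E t) x := rfl
    _ = x := by rw [h1]; rfl
  have hEN : ∀ t ∈ Ioo 0 a, ∀ x, E t (N t x) = x := by
    intro t ht x
    have h1 : E t * N t = 1 := Ring.mul_inverse_cancel _ (hunit t ht)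
    calc E t (N t x) = (E t * N t) x := rfl
    _ = x := by rw [h1]; rfl
  have hNd : ∀ t ∈ Ioo 0 a, HasDerivAt N (-(N t * E₁ t * N t)) t := by
    intro t ht
    obtain ⟨u, hu⟩ := hunit t ht
    have hinv : ((u⁻¹ : (EuclideanSpace ℝ (Fin k) →L[ℝ] EuclideanSpace ℝ (Fin k))ˣ) :
        EuclideanSpace ℝ (Fin k) →L[ℝ] EuclideanSpace ℝ (Fin k)) = N t := by
      rw [hNdef]
      simp only [← hu, Ring.inverse_unit]
    have hf := hasFDerivAt_ringInverse (𝕜 := ℝ) u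
    rw [hu] at hf
    have := hf.comp_hasDerivAt t (hEd t)
    refine this.congr_deriv ?_
    symm
    simp [hinv, ContinuousLinearMap.mulLeftRight_apply]
  set S := fun t => E₁ t * N t with hSdef
  have hSapp : ∀ t x, S t x = E₁ t (N t x) := fun t x => rfl
  have hSd : ∀ t ∈ Ioo 0 a, HasDerivAt S (E₂ t * N t + E₁ t * -(N t * E₁ t * N t)) t :=
    fun t ht => (hE₁d t).mul (hNd t ht)
  have hE₂x : ∀ t ∈ Ioo 0 a, ∀ x, E₂ t x = -(R t (E t x)) := by
    intro t ht x
    rw [hE₂def, opE_apply, hEdef, opE_apply, map_sum, ← Finset.sum_neg_distrib]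
    congr 1
    ext i
    rw [hjacobi i t ht, map_smul, smul_neg]
  have hSd' : ∀ t ∈ Ioo 0 a, HasDerivAt S (-(R t) - S t * S t) t := by
    intro t ht
    have h1 := hSd t ht
    have h2 : E₂ t * N t + E₁ t * -(N t * E₁ t * N t) = -(R t) - S t * S t := by
      apply ContinuousLinearMap.ext
      intro x
      have e1 : (E₂ t * N t + E₁ t * -(N t * E₁ t * N t)) x
          = E₂ t (N t x) + E₁ t (-(N t (E₁ t (N t x)))) := rfl
      have e2 : (-(R t) - S t * S t) x = -(R t x) - E₁ t (N t (E₁ t (N t x))) := rfl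
      rw [e1, e2, hE₂x t ht, hEN t ht, map_neg]
      abel
    rwa [h2] at h1
  -- symmetry of S
  have hE₁E : ∀ t ∈ Ioo 0 a, ∀ x y : EuclideanSpace ℝ (Fin k),
      ⟪E₁ t x, E t y⟫ = ⟪E t x, E₁ t y⟫ := by
    intro t ht x y
    rw [hE₁def, hEdef, opE_apply, opE_apply, opE_apply, opE_apply]
    rw [sum_inner, sum_inner]
    apply Finset.sum_congr rfl
    intro i _
    rw [inner_sum, inner_sum]
    apply Finset.sum_congr rfl
    intro j _
    rw [real_inner_smul_left, real_inner_smul_left, real_inner_smul_right,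
      real_inner_smul_right, hsymsol i j t ht]
  have hSsym : ∀ t ∈ Ioo 0 a, ∀ v w : EuclideanSpace ℝ (Fin k),
      ⟪S t v, w⟫ = ⟪v, S t w⟫ := by
    intro t ht v w
    have h1 : ⟪S t v, w⟫ = ⟪E₁ t (N t v), E t (N t w)⟫ := by rw [hSapp, hEN t ht]
    have h2 : ⟪v, S t w⟫ = ⟪E t (N t v), E₁ t (N t w)⟫ := by rw [hSapp, hEN t ht]
    rw [h1, h2, hE₁E t ht]
  -- S applied to ε i0
  have hSε : ∀ t ∈ Ioo 0 a, S t (ε i0 t) = deriv (ε i0) t := by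
    intro t ht
    have h1 : ε i0 t = E t (EuclideanSpace.single i0 1) := (opE_single ε t i0).symm
    rw [h1, hSapp, hNE t ht]
    exact opE_single (fun i => deriv (ε i)) t i0
  -- key bound for unit vectors
  have hkey : ∀ t ∈ Ioo 0 a, ∀ v : EuclideanSpace ℝ (Fin k), ‖v‖ = 1 →
      ⟪S t v, v⟫ ≤ Real.cosh t / Real.sinh t := by
    intro t ht v hv
    apply riccati_coth (fun s => ⟪S s v, v⟫) (fun s => ⟪(-(R s) - S s * S s) v, v⟫) _ _ ht
    · intro s hs
      have h1 : HasDerivAt (fun s => S s v) ((-(R s) - S s * S s) v) s :=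
        ((ContinuousLinearMap.apply ℝ (EuclideanSpace ℝ (Fin k)) v).hasFDerivAt).comp_hasDerivAt
          s (hSd' s hs)
      have h2 := h1.inner ℝ (hasDerivAt_const s v)
      simpa using h2
    · intro s hs
      show ⟪(-(R s) - S s * S s) v, v⟫ ≤ 1 - ⟪S s v, v⟫^2
      have e1 : ⟪(-(R s) - S s * S s) v, v⟫ = -⟪R s v, v⟫ - ⟪S s (S s v), v⟫ := by
        have : (-(R s) - S s * S s) v = -(R s v) - S s (S s v) := rfl
        rw [this, inner_sub_left, inner_neg_left]
      rw [e1]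
      have e2 : ⟪S s (S s v), v⟫ = ⟪S s v, S s v⟫ := hSsym s hs (S s v) v
      rw [e2]
      have h3 : -⟪R s v, v⟫ ≤ 1 := by
        have := hRbound s hs v
        rw [hv] at this
        linarith [this]
      have h4 : ⟪S s v, v⟫ * ⟪S s v, v⟫ ≤ ⟪S s v, S s v⟫ * ⟪v, v⟫ :=
        real_inner_mul_inner_self_le _ _
      have h5 : ⟪v, v⟫ = 1 := by
        rw [real_inner_self_eq_norm_sq, hv]; norm_num
      rw [h5, mul_one] at h4
      nlinarith
  -- key bound for ε i0
  have hkey2 : ∀ t ∈ Ioo 0 a,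
      ⟪deriv (ε i0) t, ε i0 t⟫ * Real.sinh t ≤ ‖ε i0 t‖^2 * Real.cosh t := by
    intro t ht
    have hne : ε i0 t ≠ 0 := (hindep t ht).ne_zero i0
    have hnorm : 0 < ‖ε i0 t‖ := norm_pos_iff.2 hne
    set v : EuclideanSpace ℝ (Fin k) := ‖ε i0 t‖⁻¹ • ε i0 t with hvdef
    have hv1 : ‖v‖ = 1 := by
      rw [hvdef, norm_smul, norm_inv, norm_norm, inv_mul_cancel₀ hnorm.ne']
    have hb := hkey t ht v hv1
    have he : ⟪S t v, v⟫ = ‖ε i0 t‖⁻¹ * (‖ε i0 t‖⁻¹ * ⟪deriv (ε i0) t, ε i0 t⟫) := by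
      rw [hvdef, map_smul, real_inner_smul_left, real_inner_smul_right, hSε t ht]
    rw [he] at hb
    have hsinh : 0 < Real.sinh t := Real.sinh_pos_iff.2 ht.1
    rw [le_div_iff₀ hsinh] at hb
    calc ⟪deriv (ε i0) t, ε i0 t⟫ * Real.sinh t
        = (‖ε i0 t‖⁻¹ * (‖ε i0 t‖⁻¹ * ⟪deriv (ε i0) t, ε i0 t⟫) * Real.sinh t)
          * ‖ε i0 t‖^2 := by
          have hn : (‖ε i0 t‖:ℝ) ≠ 0 := hnorm.ne'
          generalize ⟪deriv (ε i0) t, ε i0 t⟫ = X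
          field_simp
    _ ≤ Real.cosh t * ‖ε i0 t‖^2 :=
          mul_le_mul_of_nonneg_right hb (by positivity)
    _ = ‖ε i0 t‖^2 * Real.cosh t := by ring
    -- final assembly
  have hgd : ∀ t, HasDerivAt (fun t => ⟪ε i0 t, ε i0 t⟫) (2 * ⟪deriv (ε i0) t, ε i0 t⟫) t := by
    intro t
    have hεd : HasDerivAt (ε i0) (deriv (ε i0) t) t := ((hdiff i0).1 t).hasDerivAt
    have h2 := hεd.inner ℝ hεd
    have h3 : 2 * ⟪deriv (ε i0) t, ε i0 t⟫ = ⟪ε i0 t, deriv (ε i0) t⟫ + ⟪deriv (ε i0) t, ε i0 t⟫ := by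
      rw [real_inner_comm]
      ring
    rw [h3]
    exact h2
  set F : ℝ → ℝ := fun t => ⟪ε i0 t, ε i0 t⟫ / Real.sinh t ^ 2 with hFdef
  have hFd : ∀ t ∈ Ioo 0 a, HasDerivAt F
      ((2 * ⟪deriv (ε i0) t, ε i0 t⟫ * Real.sinh t ^ 2
        - ⟪ε i0 t, ε i0 t⟫ * (2 * Real.sinh t * Real.cosh t)) / (Real.sinh t ^ 2) ^ 2) t := by
    intro t ht
    have hsinh : 0 < Real.sinh t := Real.sinh_pos_iff.2 ht.1
    have hden : HasDerivAt (fun t => Real.sinh t ^ 2) (2 * Real.sinh t * Real.cosh t) t := by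
      have h3 := (Real.hasDerivAt_sinh t).pow 2
      refine h3.congr_deriv ?_
      norm_num
    exact (hgd t).div hden (by positivity)
  have hFanti : AntitoneOn F (Ioo 0 a) := by
    apply antitoneOn_of_deriv_nonpos (convex_Ioo 0 a)
    · intro x hx
      exact ((hFd x hx).continuousAt).continuousWithinAt
    · intro x hx
      rw [interior_Ioo] at hx
      exact ((hFd x hx).differentiableAt).differentiableWithinAt
    · intro x hx
      rw [interior_Ioo] at hx
      rw [(hFd x hx).deriv]
      apply div_nonpos_of_nonpos_of_nonneg _ (by positivity)
      have h2 := hkey2 x hx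
      have hsinh : 0 < Real.sinh x := Real.sinh_pos_iff.2 hx.1
      have hg : ⟪ε i0 x, ε i0 x⟫ = ‖ε i0 x‖^2 := real_inner_self_eq_norm_sq _
      rw [hg]
      have h4 : 2 * ⟪deriv (ε i0) x, ε i0 x⟫ * Real.sinh x ^ 2
          - ‖ε i0 x‖^2 * (2 * Real.sinh x * Real.cosh x)
          = 2 * Real.sinh x * (⟪deriv (ε i0) x, ε i0 x⟫ * Real.sinh x
            - ‖ε i0 x‖^2 * Real.cosh x) := by ring
      rw [h4]
      apply mul_nonpos_of_nonneg_of_nonpos (by positivity)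
      linarith
  intro x hx y hy hxy
  have hFyx := hFanti hx hy hxy
  have hsx : 0 < Real.sinh x := Real.sinh_pos_iff.2 hx.1
  have hsy : 0 < Real.sinh y := Real.sinh_pos_iff.2 hy.1
  have hFy : F y = (‖ε i0 y‖ / Real.sinh y)^2 := by
    rw [hFdef]
    simp only
    rw [real_inner_self_eq_norm_sq, div_pow]
  have hFx : F x = (‖ε i0 x‖ / Real.sinh x)^2 := by
    rw [hFdef]
    simp only
    rw [real_inner_self_eq_norm_sq, div_pow]
  rw [hFy, hFx] at hFyx
  have h0y : 0 ≤ ‖ε i0 y‖ / Real.sinh y := by positivity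
  have h0x : 0 ≤ ‖ε i0 x‖ / Real.sinh x := by positivity
  exact (pow_le_pow_iff_left₀ h0y h0x (by norm_num)).1 hFyx
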